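/- Let Γ be a basic game that has a strictly convex potential in each state, let I be an information structure, and let ŷ* be a Bayesian Wardrop equilibrium of (Γ, I) with interim total flows (y*(τ))_τ; these total flows are unique among Bayesian Wardrop equilibria at every type profile τ with Σ_θ p(θ)π(τ|θ) > 0. Then for every δ > 0 there exists α > 0 such that for every интерim flow profile ŷ with Φ_π(ŷ) ≤ min Φ_π + α, one has |y_a(τ) − y*_a(τ)| ≤ δ for every action a and every type profile τ with Σ_θ p(θ)π(τ|θ) > 0. -/

import Mathlib

set_option linter.unusedSectionVars false


noncomputable section

namespace NonatomicGames

/-- An information structure: finitely many populations with sizes summing to one,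
a finite type set per population, and a signal distribution `π θ` for each state. -/
structure InfoStructure (Θ : Type) where
  K : Type
  [instFintypeK : Fintype K]
  [instDecEqK : DecidableEq K]
  T : K → Type
  [instFintypeT : ∀ k, Fintype (T k)]
  [instDecEqT : ∀ k, DecidableEq (T k)]
  γ : K → ℝ
  γ_pos : ∀ k, 0 < γ k
  γ_sum : ∑ k, γ k = 1
  π : Θ → (∀ k, T k) → ℝ
  π_nonneg : ∀ θ τ, 0 ≤ π θ τ
  π_sum : ∀ θ, ∑ τ, π θ τ = 1

attribute [instance] InfoStructure.instFintypeK InfoStructure.instDecEqK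
  InfoStructure.instFintypeT InfoStructure.instDecEqT

/-- A direct information structure: the type set of each population is the action set `A`. -/
structure DirectInfoStructure (A Θ : Type) [Fintype A] [DecidableEq A] where
  K : Type
  [instFintypeK : Fintype K]
  [instDecEqK : DecidableEq K]
  γ : K → ℝ
  γ_pos : ∀ k, 0 < γ k
  γ_sum : ∑ k, γ k = 1
  π : Θ → (K → A) → ℝ
  π_nonneg : ∀ θ τ, 0 ≤ π θ τ
  π_sum : ∀ θ, ∑ τ, π θ τ = 1

attribute [instance] DirectInfoStructure.instFintypeK DirectInfoStructure.instDecEqK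

open MeasureTheory Finset

variable {A Θ : Type} [Fintype A] [DecidableEq A] [Fintype Θ]

/-- The information structure associated with a direct information structure. -/
def DirectInfoStructure.toInfo (I : DirectInfoStructure A Θ) : InfoStructure Θ where
  K := I.K
  instFintypeK := I.instFintypeK
  instDecEqK := I.instDecEqK
  T := fun _ => A
  instFintypeT := fun _ => inferInstanceAs (Fintype A)
  instDecEqT := fun _ => inferInstanceAs (DecidableEq A)
  γ := I.γ
  γ_pos := I.γ_pos
  γ_sum := I.γ_sum
  π := I.π
  π_nonneg := I.π_nonneg
  π_sum := I.π_sum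

/-- The obedient interim flow profile of a direct information structure:
population `k` receiving recommendation `t` puts all its mass `γ k` on action `t`. -/
def DirectInfoStructure.obedient (I : DirectInfoStructure A Θ) :
    ∀ _k : I.K, A → A → ℝ :=
  fun k t a => if t = a then I.γ k else 0

/-- `yhat` is an interim flow profile: nonnegative flows summing to the population sizes. -/
def IsInterim (I : InfoStructure Θ) (yhat : ∀ k, I.T k → A → ℝ) : Prop :=
  (∀ k t a, 0 ≤ yhat k t a) ∧ ∀ k t, ∑ a, yhat k t a = I.γ k

/-- The interim total flow profile given the type profile `τ`. -/
def totalFlow (I : InfoStructure Θ) (yhat : ∀ k, I.T k → A → ℝ) (τ : ∀ k, I.T k) :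
    A → ℝ :=
  fun a => ∑ k, yhat k (τ k) a

/-- The total probability `P(τᵏ)` of type `tk` for population `k`. -/
def typeProb (I : InfoStructure Θ) (p : Θ → ℝ) (k : I.K) (tk : I.T k) : ℝ :=
  ∑ θ, ∑ τ : ∀ j, I.T j, if τ k = tk then p θ * I.π θ τ else 0

/-- Bayesian Wardrop ε-equilibrium of the basic game `(p, c)` extended with `I`. -/
def IsBWEps (I : InfoStructure Θ) (p : Θ → ℝ) (c : A → (A → ℝ) → Θ → ℝ) (ε : ℝ)
    (yhat : ∀ k, I.T k → A → ℝ) : Prop :=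
  IsInterim I yhat ∧
  ∀ (k : I.K) (tk : I.T k), 0 < typeProb I p k tk →
    ∀ a b : A, 0 < yhat k tk a →
      (∑ θ, ∑ τ : ∀ j, I.T j,
        if τ k = tk then
          p θ * I.π θ τ * (c a (totalFlow I yhat τ) θ - c b (totalFlow I yhat τ) θ)
        else 0)
      ≤ ε * typeProb I p k tk

/-- The outcome (state-dependent distribution over flow profiles) induced by `yhat`. -/
def outcomeMeasure (I : InfoStructure Θ) (yhat : ∀ k, I.T k → A → ℝ) (θ : Θ) :
    Measure (A → ℝ) :=
  ∑ τ : ∀ k, I.T k, ENNReal.ofReal (I.π θ τ) • Measure.dirac (totalFlow I yhat τ)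

/-- The probability that the induced outcome puts on the flow profile `z` in state `θ`. -/
def outcomeWeight (I : InfoStructure Θ) (yhat : ∀ k, I.T k → A → ℝ) (θ : Θ)
    (z : A → ℝ) : ℝ :=
  ∑ τ : ∀ k, I.T k, if totalFlow I yhat τ = z then I.π θ τ else 0

/-- The auxiliary (non-normalized interim) cost `C_a^{k,τᵏ}(yhat)`. -/
def auxCost (I : InfoStructure Θ) (p : Θ → ℝ) (c : A → (A → ℝ) → Θ → ℝ)
    (yhat : ∀ k, I.T k → A → ℝ) (k : I.K) (tk : I.T k) (a : A) : ℝ :=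
  ∑ θ, ∑ τ : ∀ j, I.T j,
    if τ k = tk then p θ * I.π θ τ * c a (totalFlow I yhat τ) θ else 0

/-- The potential `Φ_π` of the auxiliary multi-population game. -/
def potPi (I : InfoStructure Θ) (p : Θ → ℝ) (Φ : Θ → (A → ℝ) → ℝ)
    (yhat : ∀ k, I.T k → A → ℝ) : ℝ :=
  ∑ θ, ∑ τ : ∀ k, I.T k, p θ * I.π θ τ * Φ θ (totalFlow I yhat τ)

/-- The social cost `SC(y, θ) = Σ_a y_a c_a(y, θ)`. -/
def socialCost (c : A → (A → ℝ) → Θ → ℝ) (y : A → ℝ) (θ : Θ) : ℝ :=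
  ∑ a, y a * c a y θ

/-- The total cost `TC(yhat)`. -/
def totalCost (I : InfoStructure Θ) (p : Θ → ℝ) (c : A → (A → ℝ) → Θ → ℝ)
    (yhat : ∀ k, I.T k → A → ℝ) : ℝ :=
  ∑ k, ∑ tk : I.T k, ∑ a, yhat k tk a * auxCost I p c yhat k tk a

/-- An outcome: a state-dependent Borel probability measure supported on the simplex `Y`. -/
def IsOutcome (μ : Θ → Measure (A → ℝ)) : Prop :=
  (∀ θ, IsProbabilityMeasure (μ θ)) ∧ ∀ θ, μ θ (stdSimplex ℝ A)ᶜ = 0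

/-- Bayes correlated Wardrop equilibrium of the basic game `(p, c)`. -/
def IsBCWE (p : Θ → ℝ) (c : A → (A → ℝ) → Θ → ℝ) (μ : Θ → Measure (A → ℝ)) : Prop :=
  IsOutcome μ ∧
  ∀ a b : A,
    ∑ θ, p θ * ∫ y, y a * c a y θ ∂(μ θ) ≤ ∑ θ, p θ * ∫ y, y a * c b y θ ∂(μ θ)

/-- `Φ` is a (state-by-state) potential for the cost profile `c`: for each state it is
continuously differentiable on an open neighborhood of the simplex and its partial
derivative in the direction of each action `a` is the cost of `a`. -/
def IsPotential (c : A → (A → ℝ) → Θ → ℝ) (Φ : Θ → (A → ℝ) → ℝ) : Prop :=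
  ∀ θ, ∃ U : Set (A → ℝ), IsOpen U ∧ stdSimplex ℝ A ⊆ U ∧
    ContDiffOn ℝ 1 (Φ θ) U ∧
    ∀ y ∈ stdSimplex ℝ A, ∀ a, fderiv ℝ (Φ θ) y (Pi.single a 1) = c a y θ

section Helpers

variable {I : InfoStructure Θ} {p : Θ → ℝ} {c : A → (A → ℝ) → Θ → ℝ}
  {Φ : Θ → (A → ℝ) → ℝ}

lemma totalFlow_mem_stdSimplex {yhat : ∀ k, I.T k → A → ℝ}
    (hy : IsInterim I yhat) (τ : ∀ k, I.T k) :
    totalFlow I yhat τ ∈ stdSimplex ℝ A := by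
  constructor
  · intro a
    exact Finset.sum_nonneg fun k _ => hy.1 k (τ k) a
  · rw [show ∑ a, totalFlow I yhat τ a = ∑ k, ∑ a, yhat k (τ k) a from Finset.sum_comm]
    simp only [hy.2]
    exact I.γ_sum

lemma pi_single_decomp (d : A → ℝ) : d = ∑ a, d a • (Pi.single a 1 : A → ℝ) := by
  funext j
  rw [Finset.sum_apply]
  simp [Pi.single_apply]

lemma hasDerivAt_phi_line (hΦ : IsPotential c Φ) (θ : Θ) {y : A → ℝ}
    (hy : y ∈ stdSimplex ℝ A) (d : A → ℝ) :
    HasDerivAt (fun t : ℝ => Φ θ (y + t • d)) (∑ a, d a * c a y θ) 0 := by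
  obtain ⟨U, hUo, hUs, hUd, hgrad⟩ := hΦ θ
  have hyU : y ∈ U := hUs hy
  have hdiff : DifferentiableAt ℝ (Φ θ) y :=
    (hUd.contDiffAt (hUo.mem_nhds hyU)).differentiableAt one_ne_zero
  have hF : HasFDerivAt (Φ θ) (fderiv ℝ (Φ θ) y) y := hdiff.hasFDerivAt
  have hcurve : HasDerivAt (fun t : ℝ => y + t • d) d 0 := by
    simpa using ((hasDerivAt_id (0:ℝ)).smul_const d).const_add y
  have hcomp := hF.comp_hasDerivAt_of_eq 0 hcurve (by simp)
  have hval : fderiv ℝ (Φ θ) y d = ∑ a, d a * c a y θ := by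
    conv_lhs => rw [pi_single_decomp d]
    rw [map_sum]
    refine Finset.sum_congr rfl fun a _ => ?_
    rw [ContinuousLinearMap.map_smul, hgrad y hy a, smul_eq_mul]
  rw [hval] at hcomp
  exact hcomp

/-- The auxiliary cost identity: the equilibrium sum is a difference of aux costs. -/
lemma auxCost_sub (yhat : ∀ k, I.T k → A → ℝ) (k : I.K) (tk : I.T k) (a b : A) :
    (∑ θ, ∑ τ : ∀ j, I.T j,
        if τ k = tk then
          p θ * I.π θ τ * (c a (totalFlow I yhat τ) θ - c b (totalFlow I yhat τ) θ)
        else 0)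
      = auxCost I p c yhat k tk a - auxCost I p c yhat k tk b := by
  rw [auxCost, auxCost, ← Finset.sum_sub_distrib]
  refine Finset.sum_congr rfl fun θ _ => ?_
  rw [← Finset.sum_sub_distrib]
  refine Finset.sum_congr rfl fun τ _ => ?_
  split_ifs <;> ring

lemma typeProb_nonneg (k : I.K) (tk : I.T k) (hp : ∀ θ, 0 ≤ p θ) :
    0 ≤ typeProb I p k tk := by
  refine Finset.sum_nonneg fun θ _ => Finset.sum_nonneg fun τ _ => ?_
  split_ifs
  · exact mul_nonneg (hp θ) (I.π_nonneg θ τ)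
  · exact le_refl 0

lemma auxCost_eq_zero_of_typeProb_eq_zero (hp : ∀ θ, 0 ≤ p θ)
    (yhat : ∀ k, I.T k → A → ℝ) {k : I.K} {tk : I.T k}
    (h : typeProb I p k tk = 0) (a : A) : auxCost I p c yhat k tk a = 0 := by
  have hterm : ∀ θ ∈ Finset.univ, ∀ τ ∈ Finset.univ,
      (if τ k = tk then p θ * I.π θ τ else 0) = 0 := by
    intro θ hθ τ hτ
    have h1 := (Finset.sum_eq_zero_iff_of_nonneg (fun θ _ =>
      Finset.sum_nonneg fun τ _ => by
        split_ifs with hc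
        · exact mul_nonneg (hp θ) (I.π_nonneg θ τ)
        · exact le_refl 0)).mp h θ hθ
    exact (Finset.sum_eq_zero_iff_of_nonneg (fun τ _ => by
      split_ifs with hc
      · exact mul_nonneg (hp θ) (I.π_nonneg θ τ)
      · exact le_refl 0)).mp h1 τ hτ
  rw [auxCost]
  refine Finset.sum_eq_zero fun θ _ => Finset.sum_eq_zero fun τ _ => ?_
  have := hterm θ (Finset.mem_univ θ) τ (Finset.mem_univ τ)
  split_ifs with hc
  · rw [if_pos hc] at this
    rw [this, zero_mul]
  · rfl

lemma dirDeriv_eq (y z : ∀ k, I.T k → A → ℝ) :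
    ∑ θ, ∑ τ : ∀ k, I.T k, p θ * I.π θ τ *
        (∑ a, (totalFlow I z τ a - totalFlow I y τ a) * c a (totalFlow I y τ) θ)
      = ∑ k, ∑ tk, ∑ a, (z k tk a - y k tk a) * auxCost I p c y k tk a := by
  have key : ∀ k : I.K,
      ∑ tk, ∑ a, (z k tk a - y k tk a) * auxCost I p c y k tk a
        = ∑ θ, ∑ τ : ∀ j, I.T j, ∑ a,
            (z k (τ k) a - y k (τ k) a) * (p θ * I.π θ τ * c a (totalFlow I y τ) θ) := by
    intro k
    unfold auxCost
    simp only [Finset.mul_sum, mul_ite, mul_zero]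
    -- LHS : ∑ tk, ∑ a, ∑ θ, ∑ τ, ite
    rw [Finset.sum_comm]                                   -- a tk θ τ
    conv_lhs => enter [2, a]; rw [Finset.sum_comm]         -- a θ tk τ
    conv_lhs => enter [2, a, 2, θ]; rw [Finset.sum_comm]   -- a θ τ tk
    -- collapse the tk-sum
    conv_lhs => enter [2, a, 2, θ, 2, τ]; rw [Finset.sum_ite_eq Finset.univ (τ k)
      (fun tk => (z k tk a - y k tk a) * (p θ * I.π θ τ * c a (totalFlow I y τ) θ))]
    simp only [Finset.mem_univ, if_true]
    -- reorder a θ τ  →  θ τ a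
    rw [Finset.sum_comm]                                   -- θ a τ
    conv_lhs => enter [2, θ]; rw [Finset.sum_comm]         -- θ τ a
  have expand : ∀ θ, ∀ τ : ∀ k, I.T k,
      p θ * I.π θ τ * (∑ a, (totalFlow I z τ a - totalFlow I y τ a) * c a (totalFlow I y τ) θ)
        = ∑ a, ∑ k, (z k (τ k) a - y k (τ k) a) * (p θ * I.π θ τ * c a (totalFlow I y τ) θ) := by
    intro θ τ
    rw [Finset.mul_sum]
    refine Finset.sum_congr rfl fun a _ => ?_
    rw [totalFlow, totalFlow, ← Finset.sum_sub_distrib, Finset.sum_mul, Finset.mul_sum]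
    exact Finset.sum_congr rfl fun kk _ => by ring
  calc
    ∑ θ, ∑ τ : ∀ k, I.T k, p θ * I.π θ τ *
        (∑ a, (totalFlow I z τ a - totalFlow I y τ a) * c a (totalFlow I y τ) θ)
      = ∑ θ, ∑ τ : ∀ k, I.T k, ∑ a, ∑ k,
          (z k (τ k) a - y k (τ k) a) * (p θ * I.π θ τ * c a (totalFlow I y τ) θ) := by
        exact Finset.sum_congr rfl fun θ _ => Finset.sum_congr rfl fun τ _ => expand θ τ
    _ = ∑ k, ∑ θ, ∑ τ : ∀ j, I.T j, ∑ a,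
          (z k (τ k) a - y k (τ k) a) * (p θ * I.π θ τ * c a (totalFlow I y τ) θ) := by
        conv_lhs => enter [2, θ, 2, τ]; rw [Finset.sum_comm]  -- θ τ k a
        conv_lhs => enter [2, θ]; rw [Finset.sum_comm]        -- θ k τ a
        rw [Finset.sum_comm]                                   -- k θ τ a
    _ = ∑ k, ∑ tk, ∑ a, (z k tk a - y k tk a) * auxCost I p c y k tk a := by
        exact Finset.sum_congr rfl fun k _ => (key k).symm

lemma dirDeriv_nonneg (hp : ∀ θ, 0 < p θ) {y z : ∀ k, I.T k → A → ℝ}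
    (hy : IsBWEps I p c 0 y) (hz : IsInterim I z) :
    0 ≤ ∑ k, ∑ tk, ∑ a, (z k tk a - y k tk a) * auxCost I p c y k tk a := by
  refine Finset.sum_nonneg fun k _ => Finset.sum_nonneg fun tk _ => ?_
  by_cases hP : 0 < typeProb I p k tk
  · -- positive type probability: equilibrium condition
    have hA : (Finset.univ : Finset A).Nonempty := by
      by_contra hA
      rw [Finset.not_nonempty_iff_eq_empty] at hA
      have hsum := hy.1.2 k tk
      rw [hA, Finset.sum_empty] at hsum
      linarith [I.γ_pos k]
    obtain ⟨b0, _, hb0⟩ := Finset.exists_min_image Finset.univ (auxCost I p c y k tk) hA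
    have hyeq : ∀ a, y k tk a * auxCost I p c y k tk a
        = y k tk a * auxCost I p c y k tk b0 := by
      intro a
      rcases eq_or_lt_of_le (hy.1.1 k tk a) with h0 | hpos
      · rw [← h0, zero_mul, zero_mul]
      · have heq := hy.2 k tk hP a b0 hpos
        rw [auxCost_sub, zero_mul] at heq
        have := le_antisymm (by linarith) (hb0 a (Finset.mem_univ a))
        rw [this]
    have h1 : ∑ a, y k tk a * auxCost I p c y k tk a = I.γ k * auxCost I p c y k tk b0 := by
      rw [Finset.sum_congr rfl fun a _ => hyeq a, ← Finset.sum_mul, hy.1.2 k tk]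
    have h2 : I.γ k * auxCost I p c y k tk b0 ≤ ∑ a, z k tk a * auxCost I p c y k tk a := by
      calc I.γ k * auxCost I p c y k tk b0
          = ∑ a, z k tk a * auxCost I p c y k tk b0 := by rw [← Finset.sum_mul, hz.2 k tk]
        _ ≤ ∑ a, z k tk a * auxCost I p c y k tk a :=
            Finset.sum_le_sum fun a _ =>
              mul_le_mul_of_nonneg_left (hb0 a (Finset.mem_univ a)) (hz.1 k tk a)
    have h3 : ∑ a, (z k tk a - y k tk a) * auxCost I p c y k tk a
        = (∑ a, z k tk a * auxCost I p c y k tk a)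
          - ∑ a, y k tk a * auxCost I p c y k tk a := by
      rw [← Finset.sum_sub_distrib]
      exact Finset.sum_congr rfl fun a _ => by ring
    linarith
  · -- zero type probability: all aux costs vanish
    have h0 : typeProb I p k tk = 0 :=
      le_antisymm (not_lt.mp hP) (typeProb_nonneg k tk fun θ => (hp θ).le)
    have := auxCost_eq_zero_of_typeProb_eq_zero (c := c) (fun θ => (hp θ).le) y h0
    simp [this]

/-- A Bayesian Wardrop equilibrium minimizes the associated potential. -/
lemma bwe_isMin (hp : ∀ θ, 0 < p θ) (hΦ : IsPotential c Φ)
    (hconv : ∀ θ, StrictConvexOn ℝ (stdSimplex ℝ A) (Φ θ))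
    {y z : ∀ k, I.T k → A → ℝ} (hy : IsBWEps I p c 0 y) (hz : IsInterim I z) :
    potPi I p Φ y ≤ potPi I p Φ z := by
  set g : ℝ → ℝ := fun t => ∑ θ, ∑ τ : ∀ k, I.T k,
    p θ * I.π θ τ * Φ θ (totalFlow I y τ + t • (totalFlow I z τ - totalFlow I y τ)) with hgdef
  have hg0 : g 0 = potPi I p Φ y := by simp [hgdef, potPi]
  have hg1 : g 1 = potPi I p Φ z := by simp [hgdef, potPi]
  set D : ℝ := ∑ θ, ∑ τ : ∀ k, I.T k, p θ * I.π θ τ *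
    (∑ a, (totalFlow I z τ a - totalFlow I y τ a) * c a (totalFlow I y τ) θ) with hDdef
  have hD : HasDerivAt g D 0 := by
    rw [hgdef, hDdef]
    refine HasDerivAt.fun_sum fun θ _ => HasDerivAt.fun_sum fun τ _ => ?_
    have := (hasDerivAt_phi_line hΦ θ (totalFlow_mem_stdSimplex hy.1 τ)
      (totalFlow I z τ - totalFlow I y τ)).const_mul (p θ * I.π θ τ)
    simpa [Pi.sub_apply] using this
  have hD0 : 0 ≤ D := by
    rw [hDdef, dirDeriv_eq]
    exact dirDeriv_nonneg hp hy hz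
  have hseg : ∀ t ∈ Set.Ioc (0:ℝ) 1, g t ≤ (1 - t) * g 0 + t * g 1 := by
    intro t ht
    have harg : ∀ τ : ∀ k, I.T k,
        totalFlow I y τ + t • (totalFlow I z τ - totalFlow I y τ)
          = (1 - t) • totalFlow I y τ + t • totalFlow I z τ := by
      intro τ
      rw [smul_sub, sub_smul, one_smul]
      abel
    have hstep : g t ≤ ∑ θ, ∑ τ : ∀ k, I.T k,
        p θ * I.π θ τ * ((1 - t) * Φ θ (totalFlow I y τ) + t * Φ θ (totalFlow I z τ)) := by
      rw [hgdef]
      refine Finset.sum_le_sum fun θ _ => Finset.sum_le_sum fun τ _ => ?_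
      rw [harg τ]
      refine mul_le_mul_of_nonneg_left ?_ (mul_nonneg (hp θ).le (I.π_nonneg θ τ))
      have := (hconv θ).convexOn.2 (totalFlow_mem_stdSimplex hy.1 τ)
        (totalFlow_mem_stdSimplex hz τ) (by linarith [ht.2] : (0:ℝ) ≤ 1 - t)
        ht.1.le (by ring)
      simpa [smul_eq_mul] using this
    refine hstep.trans_eq ?_
    rw [hg0, hg1]
    simp only [potPi, Finset.mul_sum, ← Finset.sum_add_distrib]
    exact Finset.sum_congr rfl fun θ _ => Finset.sum_congr rfl fun τ _ => by ring
  have hslope : D ≤ g 1 - g 0 := by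
    have htend : Filter.Tendsto (slope g 0) (nhdsWithin 0 (Set.Ioi 0)) (nhds D) := by
      refine (hasDerivAt_iff_tendsto_slope.mp hD).mono_left
        (nhdsWithin_mono 0 fun x hx => ?_)
      simp only [Set.mem_compl_iff, Set.mem_singleton_iff]
      exact ne_of_gt hx
    refine le_of_tendsto htend ?_
    filter_upwards [Ioc_mem_nhdsGT zero_lt_one] with t ht
    have h1 := hseg t ht
    rw [slope_def_field, div_le_iff₀ (by linarith [ht.1] : (0:ℝ) < t - 0)]
    ring_nf
    nlinarith [ht.1, h1]
  linarith [hg0, hg1]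

/-- Two minimizers of the potential have the same total flows at type profiles of
positive probability. -/
lemma minimizers_totalFlow_eq (hp : ∀ θ, 0 < p θ)
    (hconv : ∀ θ, StrictConvexOn ℝ (stdSimplex ℝ A) (Φ θ))
    {y z : ∀ k, I.T k → A → ℝ} (hy : IsInterim I y) (hz : IsInterim I z)
    (hymin : ∀ w, IsInterim I w → potPi I p Φ y ≤ potPi I p Φ w)
    (hzmin : ∀ w, IsInterim I w → potPi I p Φ z ≤ potPi I p Φ w)
    (τ0 : ∀ k, I.T k) (hτ0 : 0 < ∑ θ, p θ * I.π θ τ0) :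
    totalFlow I y τ0 = totalFlow I z τ0 := by
  by_contra hne
  obtain ⟨θ0, hθ0⟩ : ∃ θ0, 0 < p θ0 * I.π θ0 τ0 := by
    by_contra hc
    push_neg at hc
    have : ∑ θ, p θ * I.π θ τ0 ≤ 0 :=
      Finset.sum_nonpos fun θ _ => hc θ
    linarith
  set w : ∀ k, I.T k → A → ℝ := fun k tk a => (y k tk a + z k tk a) / 2 with hwdef
  have hw : IsInterim I w := by
    constructor
    · intro k tk a
      have := hy.1 k tk a
      have := hz.1 k tk a
      simp only [hwdef]
      linarith
    · intro k tk
      simp only [hwdef, ← Finset.sum_div, Finset.sum_add_distrib, hy.2 k tk, hz.2 k tk]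
      ring
  have hwflow : ∀ τ : ∀ k, I.T k,
      totalFlow I w τ = (1/2 : ℝ) • totalFlow I y τ + (1/2 : ℝ) • totalFlow I z τ := by
    intro τ
    funext a
    simp only [totalFlow, hwdef, Pi.add_apply, Pi.smul_apply, smul_eq_mul,
      ← Finset.sum_div, Finset.sum_add_distrib]
    ring
  have hlt : potPi I p Φ w < (1/2 : ℝ) * potPi I p Φ y + (1/2 : ℝ) * potPi I p Φ z := by
    rw [potPi, potPi, potPi]
    simp only [Finset.mul_sum, ← Finset.sum_add_distrib]
    rw [← Finset.sum_product', ← Finset.sum_product']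
    refine Finset.sum_lt_sum (fun i _ => ?_) ⟨(θ0, τ0), Finset.mem_univ _, ?_⟩
    · obtain ⟨θ, τ⟩ := i
      have h1 : Φ θ (totalFlow I w τ) ≤ (1/2 : ℝ) * Φ θ (totalFlow I y τ)
          + (1/2 : ℝ) * Φ θ (totalFlow I z τ) := by
        rw [hwflow τ]
        have := (hconv θ).convexOn.2 (totalFlow_mem_stdSimplex hy τ)
          (totalFlow_mem_stdSimplex hz τ) (by norm_num : (0:ℝ) ≤ 1/2)
          (by norm_num : (0:ℝ) ≤ 1/2) (by norm_num)
        simpa [smul_eq_mul] using this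
      have hnn : 0 ≤ p θ * I.π θ τ := mul_nonneg (hp θ).le (I.π_nonneg θ τ)
      calc p θ * I.π θ τ * Φ θ (totalFlow I w τ)
          ≤ p θ * I.π θ τ * ((1/2 : ℝ) * Φ θ (totalFlow I y τ)
            + (1/2 : ℝ) * Φ θ (totalFlow I z τ)) := mul_le_mul_of_nonneg_left h1 hnn
        _ = 1/2 * (p θ * I.π θ τ * Φ θ (totalFlow I y τ))
            + 1/2 * (p θ * I.π θ τ * Φ θ (totalFlow I z τ)) := by ring
    · have h1 : Φ θ0 (totalFlow I w τ0) < (1/2 : ℝ) * Φ θ0 (totalFlow I y τ0)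
          + (1/2 : ℝ) * Φ θ0 (totalFlow I z τ0) := by
        rw [hwflow τ0]
        have := (hconv θ0).2 (totalFlow_mem_stdSimplex hy τ0)
          (totalFlow_mem_stdSimplex hz τ0) hne (by norm_num : (0:ℝ) < 1/2)
          (by norm_num : (0:ℝ) < 1/2) (by norm_num)
        simpa [smul_eq_mul] using this
      calc p θ0 * I.π θ0 τ0 * Φ θ0 (totalFlow I w τ0)
          < p θ0 * I.π θ0 τ0 * ((1/2 : ℝ) * Φ θ0 (totalFlow I y τ0)
            + (1/2 : ℝ) * Φ θ0 (totalFlow I z τ0)) := by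
            exact mul_lt_mul_of_pos_left h1 hθ0
        _ = 1/2 * (p θ0 * I.π θ0 τ0 * Φ θ0 (totalFlow I y τ0))
            + 1/2 * (p θ0 * I.π θ0 τ0 * Φ θ0 (totalFlow I z τ0)) := by ring
  have h2 := hymin w hw
  have h3 := hzmin y hy
  have h4 := hymin z hz
  linarith

lemma continuous_totalFlow_eval (τ : ∀ k, I.T k) :
    Continuous fun yhat : ∀ k, I.T k → A → ℝ => totalFlow I yhat τ := by
  refine continuous_pi fun a => continuous_finset_sum _ fun k _ => ?_
  exact (continuous_apply a).comp ((continuous_apply (τ k)).comp (continuous_apply k))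

lemma continuousOn_potPi (hΦ : IsPotential c Φ) :
    ContinuousOn (potPi I p Φ) {yhat : ∀ k, I.T k → A → ℝ | IsInterim I yhat} := by
  refine continuousOn_finset_sum _ fun θ _ => continuousOn_finset_sum _ fun τ _ => ?_
  refine ContinuousOn.mul continuousOn_const ?_
  obtain ⟨U, hUo, hUs, hUd, _⟩ := hΦ θ
  refine (hUd.continuousOn.comp (continuous_totalFlow_eval τ).continuousOn ?_)
  intro yhat hy
  exact hUs (totalFlow_mem_stdSimplex hy τ)

lemma isClosed_interim : IsClosed {yhat : ∀ k, I.T k → A → ℝ | IsInterim I yhat} := by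
  have : {yhat : ∀ k, I.T k → A → ℝ | IsInterim I yhat}
      = (⋂ k, ⋂ tk, ⋂ a, {yhat : ∀ k, I.T k → A → ℝ | 0 ≤ yhat k tk a})
        ∩ ⋂ k, ⋂ tk, {yhat : ∀ k, I.T k → A → ℝ | ∑ a, yhat k tk a = I.γ k} := by
    ext yhat
    simp only [Set.mem_setOf_eq, Set.mem_inter_iff, Set.mem_iInter, IsInterim]
  rw [this]
  refine IsClosed.inter ?_ ?_
  · refine isClosed_iInter fun k => isClosed_iInter fun tk => isClosed_iInter fun a => ?_
    exact isClosed_le continuous_const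
      ((continuous_apply a).comp ((continuous_apply tk).comp (continuous_apply k)))
  · refine isClosed_iInter fun k => isClosed_iInter fun tk => ?_
    refine isClosed_eq ?_ continuous_const
    exact continuous_finset_sum _ fun a _ =>
      (continuous_apply a).comp ((continuous_apply tk).comp (continuous_apply k))

lemma isCompact_interim : IsCompact {yhat : ∀ k, I.T k → A → ℝ | IsInterim I yhat} := by
  refine Metric.isCompact_of_isClosed_isBounded isClosed_interim ?_
  refine Bornology.IsBounded.subset (Metric.isBounded_closedBall (x := 0) (r := 1)) ?_
  intro yhat hy
  rw [Metric.mem_closedBall, dist_zero_right]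
  rw [pi_norm_le_iff_of_nonneg zero_le_one]
  intro k
  rw [pi_norm_le_iff_of_nonneg zero_le_one]
  intro tk
  rw [pi_norm_le_iff_of_nonneg zero_le_one]
  intro a
  rw [Real.norm_eq_abs, abs_le]
  have h1 : 0 ≤ yhat k tk a := hy.1 k tk a
  have h2 : yhat k tk a ≤ I.γ k := by
    rw [← hy.2 k tk]
    exact Finset.single_le_sum (fun b _ => hy.1 k tk b) (Finset.mem_univ a)
  have h3 : I.γ k ≤ 1 := by
    rw [← I.γ_sum]
    exact Finset.single_le_sum (fun j _ => (I.γ_pos j).le) (Finset.mem_univ k)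
  constructor <;> linarith

lemma isClosed_const_prop {X : Type*} [TopologicalSpace X] (P : Prop) :
    IsClosed {x : X | P} := by
  by_cases h : P <;> simp [h]

end Helpers

/-- with a strictly convex potential, equilibrium total flows are unique
(at type profiles of positive probability), and near-minimizers of the potential have
total flows close to the equilibrium total flows. -/
theorem near_minimizers_close_to_equilibrium
    (p : Θ → ℝ) (hp_pos : ∀ θ, 0 < p θ) (hp_sum : ∑ θ, p θ = 1)
    (c : A → (A → ℝ) → Θ → ℝ)
    (hc : ∀ a θ, ContinuousOn (fun y => c a y θ) (stdSimplex ℝ A))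
    (Φ : Θ → (A → ℝ) → ℝ) (hΦ : IsPotential c Φ)
    (hconv : ∀ θ, StrictConvexOn ℝ (stdSimplex ℝ A) (Φ θ))
    (I : InfoStructure Θ)
    (ystar : ∀ k, I.T k → A → ℝ) (hstar : IsBWEps I p c 0 ystar) :
    (∀ yhat : ∀ k, I.T k → A → ℝ, IsBWEps I p c 0 yhat →
      ∀ τ : ∀ k, I.T k, 0 < ∑ θ, p θ * I.π θ τ →
        ∀ a, totalFlow I yhat τ a = totalFlow I ystar τ a) ∧
    ∀ δ : ℝ, 0 < δ → ∃ α : ℝ, 0 < α ∧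
      ∀ yhat : ∀ k, I.T k → A → ℝ, IsInterim I yhat →
        (∀ zhat : ∀ k, I.T k → A → ℝ, IsInterim I zhat →
          potPi I p Φ yhat ≤ potPi I p Φ zhat + α) →
        ∀ τ : ∀ k, I.T k, 0 < ∑ θ, p θ * I.π θ τ →
          ∀ a, |totalFlow I yhat τ a - totalFlow I ystar τ a| ≤ δ := by
  have hymin : ∀ w, IsInterim I w → potPi I p Φ ystar ≤ potPi I p Φ w :=
    fun w hw => bwe_isMin hp_pos hΦ hconv hstar hw
  constructor
  · -- uniqueness of equilibrium total flows
    intro yhat hyhat τ hτ a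
    have h1 : ∀ w, IsInterim I w → potPi I p Φ yhat ≤ potPi I p Φ w :=
      fun w hw => bwe_isMin hp_pos hΦ hconv hyhat hw
    exact congrFun (minimizers_totalFlow_eq hp_pos hconv hyhat.1 hstar.1 h1 hymin τ hτ) a
  · -- near-minimizers of the potential are close to the equilibrium
    intro δ hδ
    set Kset : Set (∀ k, I.T k → A → ℝ) :=
      {yhat | IsInterim I yhat} ∩ ⋃ τ : ∀ k, I.T k, ⋃ a : A,
        {yhat : ∀ k, I.T k → A → ℝ |
          (0 < ∑ θ, p θ * I.π θ τ) ∧ δ ≤ |totalFlow I yhat τ a - totalFlow I ystar τ a|}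
      with hKdef
    have hKclosed : IsClosed Kset := by
      refine IsClosed.inter isClosed_interim ?_
      refine isClosed_iUnion_of_finite fun τ => isClosed_iUnion_of_finite fun a => ?_
      have hc : Continuous fun yhat : ∀ k, I.T k → A → ℝ =>
          totalFlow I yhat τ a - totalFlow I ystar τ a :=
        ((continuous_apply a).comp (continuous_totalFlow_eval τ)).sub continuous_const
      exact IsClosed.inter (isClosed_const_prop _) (isClosed_le continuous_const hc.abs)
    have hKcompact : IsCompact Kset :=
      IsCompact.of_isClosed_subset isCompact_interim hKclosed Set.inter_subset_left
    rcases Kset.eq_empty_or_nonempty with hKe | hKne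
    · refine ⟨1, one_pos, ?_⟩
      intro yhat hInt _ τ hτ a
      by_contra hcon
      push_neg at hcon
      have : yhat ∈ Kset :=
        ⟨hInt, Set.mem_iUnion.mpr ⟨τ, Set.mem_iUnion.mpr ⟨a, hτ, hcon.le⟩⟩⟩
      rw [hKe] at this
      exact this
    · obtain ⟨w, hwK, hwmin⟩ := hKcompact.exists_isMinOn hKne
        ((continuousOn_potPi hΦ).mono Set.inter_subset_left)
      have hwInt : IsInterim I w := hwK.1
      have hlt : potPi I p Φ ystar < potPi I p Φ w := by
        rcases lt_or_eq_of_le (hymin w hwInt) with h | h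
        · exact h
        · exfalso
          have hwmin' : ∀ v, IsInterim I v → potPi I p Φ w ≤ potPi I p Φ v := by
            intro v hv
            rw [← h]
            exact hymin v hv
          obtain ⟨τ1, a1, hpos1, hge1⟩ : ∃ τ1 a1, (0 < ∑ θ, p θ * I.π θ τ1) ∧
              δ ≤ |totalFlow I w τ1 a1 - totalFlow I ystar τ1 a1| := by
            have := hwK.2
            simpa only [Set.mem_iUnion, Set.mem_setOf_eq] using this
          have heq := minimizers_totalFlow_eq hp_pos hconv hwInt hstar.1 hwmin' hymin τ1 hpos1
          rw [heq] at hge1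
          simp at hge1
          linarith
      refine ⟨(potPi I p Φ w - potPi I p Φ ystar) / 2, by linarith, ?_⟩
      intro yhat hInt hnear τ hτ a
      by_contra hcon
      push_neg at hcon
      have hyK : yhat ∈ Kset :=
        ⟨hInt, Set.mem_iUnion.mpr ⟨τ, Set.mem_iUnion.mpr ⟨a, hτ, hcon.le⟩⟩⟩
      have h1 := hwmin hyK
      have h2 := hnear ystar hstar.1
      simp only [Set.mem_setOf_eq] at h1
      linarith

end NonatomicGames
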